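/- Let V : ℝ^d → [0,∞) be locally bounded, not a.e. zero, and satisfy the L∞-doubling condition ‖V‖_{L∞(B(x,2r))} ≤ D‖V‖_{L∞(B(x,r))} for all x, r. Define ρ_V(x) := sup{r > 0 : r²‖V‖_{L∞(B(x,r))} ≤ 1}. Then ρ_V(x) ∈ (0,∞) for every x, and (4D)⁻¹ ρ_V(x)^{−2} ≤ ‖V‖_{L∞(B(x,ρ_V(x)))} ≤ ρ_V(x)^{−2}. -/

import Mathlib

open MeasureTheory
open scoped ENNReal

/-- The essential supremum `‖V‖_{L∞(B(x,r))}` of a non-negative function on a ball,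
valued in `ℝ≥0∞`. -/
noncomputable def LinfBall {d : ℕ} (V : EuclideanSpace ℝ (Fin d) → ℝ)
    (x : EuclideanSpace ℝ (Fin d)) (r : ℝ) : ℝ≥0∞ :=
  essSup (fun y => ENNReal.ofReal (V y)) (volume.restrict (Metric.ball x r))

/-- The radius function associated to a potential `V`:
`ρ_V(x) = sup {r > 0 : r² ‖V‖_{L∞(B(x,r))} ≤ 1}`. -/
noncomputable def rhoV {d : ℕ} (V : EuclideanSpace ℝ (Fin d) → ℝ)
    (x : EuclideanSpace ℝ (Fin d)) : ℝ :=
  sSup {r : ℝ | 0 < r ∧ ENNReal.ofReal (r ^ 2) * LinfBall V x r ≤ 1}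

section Aux
variable {d : ℕ} {V : EuclideanSpace ℝ (Fin d) → ℝ} {x : EuclideanSpace ℝ (Fin d)}

lemma Lmono {r r' : ℝ} (h : r ≤ r') : LinfBall V x r ≤ LinfBall V x r' :=
  essSup_mono_measure (Measure.absolutelyContinuous_of_le
    (Measure.restrict_mono (Metric.ball_subset_ball h) le_rfl))

lemma Lle_of_bound {r M : ℝ} (h : ∀ y ∈ Metric.ball x r, V y ≤ M) :
    LinfBall V x r ≤ ENNReal.ofReal M :=
  essSup_le_of_ae_le _ ((ae_restrict_iff' measurableSet_ball).2
    (Filter.Eventually.of_forall fun y hy => ENNReal.ofReal_le_ofReal (h y hy)))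

lemma le_L_of_pos {r : ℝ} {c : ℝ≥0∞}
    (h : volume (Metric.ball x r ∩ {y | c < ENNReal.ofReal (V y)}) ≠ 0) :
    c ≤ LinfBall V x r := by
  by_contra hlt
  push_neg at hlt
  have hb := ae_le_essSup (f := fun y => ENNReal.ofReal (V y))
    (μ := volume.restrict (Metric.ball x r))
  have h1 : ∀ᵐ y ∂(volume.restrict (Metric.ball x r)), ENNReal.ofReal (V y) ≤ c :=
    hb.mono fun y hy => hy.trans hlt.le
  have h2 := ae_iff.mp h1
  rw [Measure.restrict_apply' measurableSet_ball] at h2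
  apply h
  rw [Set.inter_comm]
  simpa [not_le] using h2

lemma null_of_L_zero (hV0 : ∀ y, 0 ≤ V y) {r : ℝ} (h : LinfBall V x r = 0) :
    volume ({y | V y ≠ 0} ∩ Metric.ball x r) = 0 := by
  have h1 : ∀ᵐ y ∂(volume.restrict (Metric.ball x r)), V y = 0 := by
    have hb := ae_le_essSup (f := fun y => ENNReal.ofReal (V y))
      (μ := volume.restrict (Metric.ball x r))
    have h' : essSup (fun y => ENNReal.ofReal (V y)) (volume.restrict (Metric.ball x r)) = 0 := h
    rw [h'] at hb
    exact hb.mono fun y hy => le_antisymm (by simpa [ENNReal.ofReal_eq_zero] using hy) (hV0 y)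
  have h2 := ae_iff.mp h1
  rw [Measure.restrict_apply' measurableSet_ball] at h2
  simpa using h2

end Aux

/-- If `V ≥ 0` is locally bounded, not a.e. zero, and `L∞`-doubling with constant `D`,
then `ρ_V(x) ∈ (0,∞)` for every `x` and
`(4D)⁻¹ ρ_V(x)⁻² ≤ ‖V‖_{L∞(B(x,ρ_V(x)))} ≤ ρ_V(x)⁻²`. -/
theorem stmt_16 {d : ℕ} (V : EuclideanSpace ℝ (Fin d) → ℝ) (D : ℝ)
    (hV0 : ∀ y, 0 ≤ V y)
    (hloc : ∀ x r, ∃ M : ℝ, ∀ y ∈ Metric.ball x r, V y ≤ M)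
    (hne : ¬ (V =ᵐ[volume] 0))
    (hD : ∀ x r, 0 < r → LinfBall V x (2 * r) ≤ ENNReal.ofReal D * LinfBall V x r) :
    ∀ x, (0 < rhoV V x ∧
        BddAbove {r : ℝ | 0 < r ∧ ENNReal.ofReal (r ^ 2) * LinfBall V x r ≤ 1}) ∧
      ENNReal.ofReal ((4 * D)⁻¹ * (rhoV V x ^ 2)⁻¹) ≤ LinfBall V x (rhoV V x) ∧
      LinfBall V x (rhoV V x) ≤ ENNReal.ofReal ((rhoV V x ^ 2)⁻¹) := by
  intro x
  set S : Set ℝ := {r : ℝ | 0 < r ∧ ENNReal.ofReal (r ^ 2) * LinfBall V x r ≤ 1} with hS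
  -- there is a radius with positive essSup
  have hTne : volume {y | V y ≠ 0} ≠ 0 := by
    intro h0
    exact hne (ae_iff.mpr (by simpa using h0))
  have hpos : ∃ R : ℝ, 0 < R ∧ 0 < LinfBall V x R := by
    by_contra hcon
    push_neg at hcon
    have hz : ∀ R : ℝ, 0 < R → LinfBall V x R = 0 := fun R hR =>
      le_antisymm (hcon R hR) zero_le
    have hcover : {y | V y ≠ 0} ⊆ ⋃ n : ℕ, {y | V y ≠ 0} ∩ Metric.ball x (n + 1) := by
      intro y hy
      obtain ⟨n, hn⟩ := exists_nat_gt (dist y x)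
      exact Set.mem_iUnion.2 ⟨n, hy, by
        simp only [Metric.mem_ball]; linarith⟩
    have : volume {y | V y ≠ 0} = 0 := by
      refine measure_mono_null hcover (measure_iUnion_null fun n => ?_)
      exact null_of_L_zero hV0 (hz _ (by positivity))
    exact hTne this
  obtain ⟨R, hR, hLR⟩ := hpos
  -- D is positive
  have hDpos : 0 < D := by
    by_contra hDle
    push_neg at hDle
    have h1 := hD x R hR
    rw [ENNReal.ofReal_eq_zero.mpr hDle, zero_mul] at h1
    have h2 : (0 : ℝ≥0∞) < LinfBall V x (2 * R) :=
      lt_of_lt_of_le hLR (Lmono (by linarith))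
    exact absurd (le_antisymm h1 zero_le) (ne_of_gt h2)
  -- S is nonempty
  obtain ⟨M, hM⟩ := hloc x 1
  set M₁ : ℝ := max M 1 with hM₁
  have hM₁pos : (0:ℝ) < M₁ := lt_of_lt_of_le one_pos (le_max_right _ _)
  set r₀ : ℝ := min 1 (1 / M₁) with hr₀def
  have hr₀pos : 0 < r₀ := lt_min one_pos (by positivity)
  have hr₀le1 : r₀ ≤ 1 := min_le_left _ _
  have hr₀mem : r₀ ∈ S := by
    constructor
    · exact hr₀pos
    · have hL : LinfBall V x r₀ ≤ ENNReal.ofReal M₁ :=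
        le_trans (Lmono hr₀le1) (Lle_of_bound fun y hy => le_trans (hM y hy) (le_max_left _ _))
      calc ENNReal.ofReal (r₀ ^ 2) * LinfBall V x r₀
          ≤ ENNReal.ofReal (r₀ ^ 2) * ENNReal.ofReal M₁ := by gcongr
        _ = ENNReal.ofReal (r₀ ^ 2 * M₁) := (ENNReal.ofReal_mul (by positivity)).symm
        _ ≤ 1 := by
            rw [show (1:ℝ≥0∞) = ENNReal.ofReal 1 by simp]
            apply ENNReal.ofReal_le_ofReal
            have h1 : r₀ ^ 2 ≤ r₀ := by nlinarith
            have h2 : r₀ ≤ 1 / M₁ := min_le_right _ _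
            calc r₀ ^ 2 * M₁ ≤ (1 / M₁) * M₁ := by nlinarith
              _ = 1 := by field_simp
  have hSne : S.Nonempty := ⟨r₀, hr₀mem⟩
  -- S is bounded above
  have hbdd : BddAbove S := by
    refine ⟨max R (Real.sqrt ((LinfBall V x R)⁻¹).toReal), fun r hr => ?_⟩
    rcases le_or_gt r R with h | h
    · exact le_trans h (le_max_left _ _)
    · have hLr : LinfBall V x R ≤ LinfBall V x r := Lmono h.le
      have h1 : ENNReal.ofReal (r ^ 2) * LinfBall V x R ≤ 1 :=
        le_trans (by gcongr) hr.2
      have h2 : ENNReal.ofReal (r ^ 2) ≤ (LinfBall V x R)⁻¹ :=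
        ENNReal.le_inv_iff_mul_le.mpr h1
      have hfin : (LinfBall V x R)⁻¹ ≠ ⊤ := by
        simp [ENNReal.inv_ne_top, ne_of_gt hLR]
      have h3 : r ^ 2 ≤ ((LinfBall V x R)⁻¹).toReal := by
        have := ENNReal.toReal_mono hfin h2
        rwa [ENNReal.toReal_ofReal (by positivity)] at this
      refine le_trans ?_ (le_max_right _ _)
      have hr0 : (0:ℝ) ≤ r := by linarith
      rw [Real.le_sqrt hr0]
      · exact h3
      · exact ENNReal.toReal_nonneg
  set ρ : ℝ := rhoV V x with hρdef
  have hρS : ρ = sSup S := rfl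
  have hρpos : 0 < ρ := lt_of_lt_of_le hr₀pos (le_csSup hbdd hr₀mem)
  -- every s in (0, ρ) is in S
  have hsubset : ∀ s : ℝ, 0 < s → s < ρ → s ∈ S := by
    intro s hs hsρ
    obtain ⟨r, hrS, hsr⟩ := exists_lt_of_lt_csSup hSne hsρ
    refine ⟨hs, le_trans (mul_le_mul' (ENNReal.ofReal_le_ofReal (by nlinarith)) (Lmono hsr.le)) hrS.2⟩
  -- upper bound
  have hupper : LinfBall V x ρ ≤ ENNReal.ofReal ((ρ ^ 2)⁻¹) := by
    by_contra hcon
    push_neg at hcon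
    obtain ⟨c, hc1, hc2⟩ := exists_between hcon
    set A : Set (EuclideanSpace ℝ (Fin d)) :=
      Metric.ball x ρ ∩ {y | c < ENNReal.ofReal (V y)} with hA
    have hApos : volume A ≠ 0 := by
      intro h0
      have h1 : ∀ᵐ y ∂(volume.restrict (Metric.ball x ρ)), ENNReal.ofReal (V y) ≤ c := by
        rw [ae_iff, Measure.restrict_apply' measurableSet_ball]
        rw [hA, Set.inter_comm] at h0
        simpa [not_le] using h0
      exact absurd (essSup_le_of_ae_le c h1) (not_le.mpr hc2)
    have hs₀ : ∃ s₀ : ℝ, 0 < s₀ ∧ s₀ < ρ ∧ volume (A ∩ Metric.ball x s₀) ≠ 0 := by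
      by_contra hcon2
      push_neg at hcon2
      have hcov : A ⊆ ⋃ n : ℕ, A ∩ Metric.ball x (ρ - 1 / (n + 1)) := by
        rintro y ⟨hy1, hy2⟩
        have hyd : dist y x < ρ := hy1
        have hy : y ∈ A := ⟨hy1, hy2⟩
        obtain ⟨n, hn⟩ := exists_nat_one_div_lt (sub_pos.mpr hyd)
        exact Set.mem_iUnion.2 ⟨n, hy, by
          simp only [Metric.mem_ball]
          have : (1:ℝ) / (n + 1) < ρ - dist y x := hn
          linarith⟩
      have h0 : volume A = 0 := by
        refine measure_mono_null hcov (measure_iUnion_null fun n => ?_)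
        rcases le_or_gt (ρ - 1 / ((n:ℝ) + 1)) 0 with h | h
        · rw [Metric.ball_eq_empty.mpr h]; simp
        · exact hcon2 _ h (by
            have : (0:ℝ) < 1 / ((n:ℝ)+1) := by positivity
            linarith)
      exact hApos h0
    obtain ⟨s₀, hs₀pos, hs₀ρ, hs₀m⟩ := hs₀
    have key : ∀ s : ℝ, s₀ < s → s < ρ → c ≤ ENNReal.ofReal ((s ^ 2)⁻¹) := by
      intro s hss hsρ
      have hspos : 0 < s := lt_trans hs₀pos hss
      have hsub : A ∩ Metric.ball x s₀ ⊆ Metric.ball x s ∩ {y | c < ENNReal.ofReal (V y)} := by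
        rintro y ⟨⟨-, hyc⟩, hyb⟩
        exact ⟨Metric.ball_subset_ball hss.le hyb, hyc⟩
      have hm : volume (Metric.ball x s ∩ {y | c < ENNReal.ofReal (V y)}) ≠ 0 := by
        intro h0
        exact hs₀m (measure_mono_null hsub h0)
      have hcL : c ≤ LinfBall V x s := le_L_of_pos hm
      have hsS := hsubset s hspos hsρ
      have h1 : ENNReal.ofReal (s ^ 2) * c ≤ 1 := le_trans (by gcongr) hsS.2
      have h2 : c ≤ (ENNReal.ofReal (s ^ 2))⁻¹ :=
        ENNReal.le_inv_iff_mul_le.mpr (by rwa [mul_comm] at h1)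
      rwa [← ENNReal.ofReal_inv_of_pos (by positivity)] at h2
    have htend : Filter.Tendsto (fun s : ℝ => ENNReal.ofReal ((s ^ 2)⁻¹)) (nhdsWithin ρ (Set.Iio ρ))
        (nhds (ENNReal.ofReal ((ρ ^ 2)⁻¹))) := by
      apply Filter.Tendsto.mono_left _ nhdsWithin_le_nhds
      apply ENNReal.continuous_ofReal.continuousAt.tendsto.comp
      exact (ContinuousAt.inv₀ (by fun_prop) (by positivity))
    have hev : ∀ᶠ s in nhdsWithin ρ (Set.Iio ρ), c ≤ ENNReal.ofReal ((s ^ 2)⁻¹) := by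
      filter_upwards [Ioo_mem_nhdsLT_of_mem (Set.mem_Ioc.mpr ⟨hs₀ρ, le_refl ρ⟩)] with s hs
      exact key s hs.1 hs.2
    have : c ≤ ENNReal.ofReal ((ρ ^ 2)⁻¹) := ge_of_tendsto htend hev
    exact absurd this (not_le.mpr hc1)
  -- lower bound
  have hlower : ENNReal.ofReal ((4 * D)⁻¹ * (ρ ^ 2)⁻¹) ≤ LinfBall V x ρ := by
    have h2ρ : (2 * ρ) ∉ S := by
      intro h
      have := le_csSup hbdd h
      rw [← hρS] at this
      linarith
    have h1 : 1 < ENNReal.ofReal ((2 * ρ) ^ 2) * LinfBall V x (2 * ρ) := by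
      by_contra h
      push_neg at h
      exact h2ρ ⟨by linarith, h⟩
    have h2 : LinfBall V x (2 * ρ) ≤ ENNReal.ofReal D * LinfBall V x ρ := hD x ρ hρpos
    set a : ℝ≥0∞ := ENNReal.ofReal (4 * D * ρ ^ 2) with ha
    have h3 : 1 < a * LinfBall V x ρ := by
      calc (1:ℝ≥0∞) < ENNReal.ofReal ((2 * ρ) ^ 2) * LinfBall V x (2 * ρ) := h1
        _ ≤ ENNReal.ofReal ((2 * ρ) ^ 2) * (ENNReal.ofReal D * LinfBall V x ρ) := by gcongr
        _ = a * LinfBall V x ρ := by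
            rw [← mul_assoc, ← ENNReal.ofReal_mul (by positivity), ha,
              show (2*ρ)^2 * D = 4 * D * ρ^2 by ring]
    have ha0 : a ≠ 0 := by
      simp only [ha, ne_eq, ENNReal.ofReal_eq_zero, not_le]
      positivity
    have haT : a ≠ ⊤ := ENNReal.ofReal_ne_top
    have h4 : a⁻¹ ≤ LinfBall V x ρ := by
      calc a⁻¹ = a⁻¹ * 1 := (mul_one _).symm
        _ ≤ a⁻¹ * (a * LinfBall V x ρ) := mul_le_mul' le_rfl h3.le
        _ = (a⁻¹ * a) * LinfBall V x ρ := (mul_assoc _ _ _).symm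
        _ = LinfBall V x ρ := by rw [ENNReal.inv_mul_cancel ha0 haT, one_mul]
    have heq : ENNReal.ofReal ((4 * D)⁻¹ * (ρ ^ 2)⁻¹) = a⁻¹ := by
      rw [ha, ← ENNReal.ofReal_inv_of_pos (by positivity)]
      congr 1
      rw [mul_inv]
      ring
    rw [heq]
    exact h4
  exact ⟨⟨hρpos, hbdd⟩, hlower, hupper⟩
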